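/- (Sufficiency of the generalized Hadamard jump condition, connected interface.) Let d ≥ 2 and let Ω, Ω⁺, Ω⁻, Γ, n, y⁺, y⁻ be as in the interface setting, and assume Γ is connected. If there exists a continuous map a : Γ → ℝ^d such that Dy⁺(x) = Dy⁻(x) + a(x) ⊗ n(x) for all x ∈ Γ, then there exists z ∈ W^{1,∞}(Ω, ℝ^d) such that Dz(x) = Dy⁺(x) for a.e. x ∈ Ω⁺ and Dz(x) = Dy⁻(x) for a.e. x ∈ Ω⁻. -/

import Mathlib

open Metric Set MeasureTheory
open scoped RealInnerProductSpace NNReal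

noncomputable section

/-- `ℝ^d` with the Euclidean structure. -/
abbrev Euc (d : ℕ) := EuclideanSpace ℝ (Fin d)

/-- Near `ξ`, the set `Γ` is the graph of a `C¹` function in a suitable Cartesian
coordinate system: there is a unit vector `ν` (the last coordinate direction) and a
`C¹` function `g` on the orthogonal hyperplane such that inside some ball around `ξ`,
`Γ` consists exactly of the points whose `ν`-coordinate equals `g` of their
hyperplane coordinates. -/
def IsC1GraphAt (d : ℕ) (Γ : Set (Euc d)) (ξ : Euc d) : Prop :=
  ∃ r : ℝ, 0 < r ∧ ∃ ν : Euc d, ‖ν‖ = 1 ∧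
    ∃ g : ((Submodule.span ℝ {ν})ᗮ : Submodule ℝ (Euc d)) → ℝ, ContDiff ℝ 1 g ∧
      Γ ∩ ball ξ r =
        {x ∈ ball ξ r | ⟪x, ν⟫ = g (Submodule.orthogonalProjection (Submodule.span ℝ {ν})ᗮ x)}

/-- A `(d-1)`-surface of class `C¹`: a relatively compact set, equal to its manifold
interior (every point has an open neighbourhood in `Γ` homeomorphic to an open ball
in `ℝ^(d-1)`), which is locally the graph of a `C¹` function. -/
structure IsC1Surface (d : ℕ) (Γ : Set (Euc d)) : Prop where
  relCompact : IsCompact (closure Γ)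
  locHomeo : ∀ ξ (hξ : ξ ∈ Γ), ∃ V : Set Γ, IsOpen V ∧ ⟨ξ, hξ⟩ ∈ V ∧
      Nonempty (V ≃ₜ (ball (0 : EuclideanSpace ℝ (Fin (d - 1))) 1 :
        Set (EuclideanSpace ℝ (Fin (d - 1)))))
  locGraph : ∀ ξ ∈ Γ, IsC1GraphAt d Γ ξ

/-- A bounded domain of class `C¹`: open, connected, bounded, and near each boundary
point, in suitable Cartesian coordinates, `Ω` is the region above the graph of a `C¹`
function and `∂Ω` is the graph itself. -/
structure IsC1Domain (d : ℕ) (Ω : Set (Euc d)) : Prop where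
  isOpen : IsOpen Ω
  isConnected : IsConnected Ω
  isBounded : Bornology.IsBounded Ω
  locGraph : ∀ ξ ∈ frontier Ω, ∃ r : ℝ, 0 < r ∧ ∃ ν : Euc d, ‖ν‖ = 1 ∧
    ∃ g : ((Submodule.span ℝ {ν})ᗮ : Submodule ℝ (Euc d)) → ℝ, ContDiff ℝ 1 g ∧
      Ω ∩ ball ξ r =
        {x ∈ ball ξ r | g (Submodule.orthogonalProjection (Submodule.span ℝ {ν})ᗮ x) < ⟪x, ν⟫} ∧
      frontier Ω ∩ ball ξ r =
        {x ∈ ball ξ r | ⟪x, ν⟫ = g (Submodule.orthogonalProjection (Submodule.span ℝ {ν})ᗮ x)}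

/-- The interface setting: `Ω` is a bounded `C¹` domain written as the disjoint union
`Ω = Ω⁺ ∪ Γ ∪ Ω⁻` of two disjoint open sets and a `C¹` interface
`Γ = Ω ∩ ∂Ω⁺ = Ω ∩ ∂Ω⁻`, and `n` is the continuous unit normal on `Γ`, outward with
respect to `Ω⁺` (i.e. normal to every `C¹` curve in `Γ`, and pointing from `Ω⁺`
towards `Ω⁻`). -/
structure InterfaceSetting (d : ℕ) (Ω Ωp Ωm Γ : Set (Euc d)) (n : Euc d → Euc d) : Prop where
  dom : IsC1Domain d Ω
  openP : IsOpen Ωp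
  openM : IsOpen Ωm
  disjointPM : Disjoint Ωp Ωm
  decomp : Ω = Ωp ∪ Γ ∪ Ωm
  interP : Γ = Ω ∩ frontier Ωp
  interM : Γ = Ω ∩ frontier Ωm
  surface : IsC1Surface d Γ
  n_cont : ContinuousOn n Γ
  n_unit : ∀ x ∈ Γ, ‖n x‖ = 1
  n_normal : ∀ x ∈ Γ, ∀ γ : ℝ → Euc d, γ 0 = x → (∀ᶠ t in nhds (0 : ℝ), γ t ∈ Γ) →
      DifferentiableAt ℝ γ 0 → ⟪deriv γ 0, n x⟫ = 0
  n_outward : ∀ x ∈ Γ, ∀ᶠ t in nhdsWithin (0 : ℝ) (Ioi 0),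
      x - t • n x ∈ Ωp ∧ x + t • n x ∈ Ωm

/-- `y ∈ C¹(cl A, ℝ^d)`: `y` coincides on a neighbourhood of `cl A` with a continuously
differentiable map, i.e. `y` is `C¹` on an open set containing `cl A`. -/
def C1OnClosure (d : ℕ) (y : Euc d → Euc d) (A : Set (Euc d)) : Prop :=
  ∃ U : Set (Euc d), IsOpen U ∧ closure A ⊆ U ∧ ContDiffOn ℝ 1 y U


set_option maxHeartbeats 2000000

section basics
variable {d : ℕ} {ν : Euc d}

lemma decomp_unit (hν : ‖ν‖ = 1) (x : Euc d) :
    ((Submodule.orthogonalProjection (Submodule.span ℝ {ν})ᗮ x : Euc d)) + ⟪x, ν⟫ • ν = x := by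
  have h : ((Submodule.orthogonalProjection (Submodule.span ℝ {ν}) x : Euc d)) +
      ((Submodule.orthogonalProjection (Submodule.span ℝ {ν})ᗮ x : Euc d)) = x :=
    Submodule.starProjection_add_starProjection_orthogonal (K := Submodule.span ℝ {ν}) x
  have h2 : ((Submodule.orthogonalProjection (Submodule.span ℝ {ν}) x : Euc d)) = ⟪x, ν⟫ • ν := by
    rw [real_inner_comm]
    exact Submodule.starProjection_unit_singleton (𝕜 := ℝ) hν x
  rw [h2] at h
  linear_combination (norm := abel) h

lemma proj_coe_norm_le (K : Submodule ℝ (Euc d)) [Submodule.HasOrthogonalProjection K] (x : Euc d) :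
    ‖(Submodule.orthogonalProjection K x : Euc d)‖ ≤ ‖x‖ := by
  have h := (Submodule.orthogonalProjection K).le_opNorm x
  have := Submodule.orthogonalProjection_norm_le K
  calc ‖(Submodule.orthogonalProjection K x : Euc d)‖ = ‖Submodule.orthogonalProjection K x‖ := rfl
    _ ≤ ‖Submodule.orthogonalProjection K‖ * ‖x‖ := h
    _ ≤ 1 * ‖x‖ := by gcongr
    _ = ‖x‖ := one_mul _

lemma inner_coe_orth (u : ((Submodule.span ℝ {ν})ᗮ : Submodule ℝ (Euc d))) :
    ⟪(u : Euc d), ν⟫ = 0 := by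
  rw [real_inner_comm]
  have := u.2
  rw [Submodule.mem_orthogonal] at this
  exact this ν (Submodule.mem_span_singleton_self ν)

lemma proj_nu_eq_zero : (Submodule.orthogonalProjection (Submodule.span ℝ {ν})ᗮ ν) = 0 := by
  apply Submodule.orthogonalProjectionOnto_apply_of_mem_orthogonal
  rw [Submodule.orthogonal_orthogonal]
  exact Submodule.mem_span_singleton_self ν
end basics

/-- local constancy of `w` on `Γ` near a chart point -/
lemma w_loc_const {d : ℕ} {Γ : Set (Euc d)} {n : Euc d → Euc d}
    {w : Euc d → Euc d} {W : Set (Euc d)} (hWopen : IsOpen W) (hΓW : Γ ⊆ W)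
    (hw : ContDiffOn ℝ 1 w W) {a : Euc d → Euc d}
    (hDw : ∀ x ∈ Γ, ∀ v : Euc d, fderiv ℝ w x v = ⟪n x, v⟫ • a x)
    (n_normal : ∀ x ∈ Γ, ∀ γ : ℝ → Euc d, γ 0 = x → (∀ᶠ t in nhds (0 : ℝ), γ t ∈ Γ) →
      DifferentiableAt ℝ γ 0 → ⟪deriv γ 0, n x⟫ = 0)
    {ξ : Euc d} (hξ : ξ ∈ Γ) (hchart : IsC1GraphAt d Γ ξ) :
    ∃ ρ > 0, ∀ x ∈ Γ, dist x ξ < ρ → w x = w ξ := by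
  obtain ⟨r, hr, ν, hν, g, hg, hgraph⟩ := hchart
  let P : ((Submodule.span ℝ {ν})ᗮ : Submodule ℝ (Euc d)) → Euc d := fun u => (u : Euc d) + g u • ν
  let π0 := Submodule.orthogonalProjection ((Submodule.span ℝ {ν})ᗮ : Submodule ℝ (Euc d))
  have hPcont : Continuous P :=
    continuous_subtype_val.add ((hg.continuous).smul continuous_const)
  have hPdiff : ∀ u, DifferentiableAt ℝ P u := fun u =>
    ((Submodule.span ℝ {ν})ᗮ.subtypeL.differentiable.differentiableAt).add
      (((hg.differentiable one_ne_zero).differentiableAt).smul_const ν)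
  have hinnerP : ∀ u, ⟪P u, ν⟫ = g u := by
    intro u
    show ⟪(u : Euc d) + g u • ν, ν⟫ = g u
    rw [inner_add_left, real_inner_smul_left, inner_coe_orth u,
      real_inner_self_eq_norm_sq, hν]
    ring
  have hprojP : ∀ u, π0 (P u) = u := by
    intro u
    show π0 ((u : Euc d) + g u • ν) = u
    rw [map_add, (π0).map_smul]
    rw [show π0 (u : Euc d) = u from Submodule.orthogonalProjection_mem_subspace_eq_self u,
      show π0 ν = 0 from proj_nu_eq_zero]
    simp
  have hP1 : ∀ u, P u ∈ ball ξ r → P u ∈ Γ := by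
    intro u hu
    have h2 : P u ∈ {x ∈ ball ξ r | ⟪x, ν⟫ = g (Submodule.orthogonalProjection (Submodule.span ℝ {ν})ᗮ x)} :=
      ⟨hu, by rw [hinnerP u, hprojP u]⟩
    rw [← hgraph] at h2
    exact h2.1
  have hξball : ξ ∈ ball ξ r := mem_ball_self hr
  have hgξ : ⟪ξ, ν⟫ = g (π0 ξ) := by
    have h2 : ξ ∈ Γ ∩ ball ξ r := ⟨hξ, hξball⟩
    rw [hgraph] at h2
    exact h2.2
  have hPξ : P (π0 ξ) = ξ := by
    show (π0 ξ : Euc d) + g (π0 ξ) • ν = ξ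
    rw [← hgξ]
    exact decomp_unit hν ξ
  have hev : ∀ᶠ u in nhds (π0 ξ), P u ∈ ball ξ r := by
    have h2 : P (π0 ξ) ∈ ball ξ r := by rw [hPξ]; exact hξball
    exact hPcont.continuousAt.eventually_mem (isOpen_ball.mem_nhds h2)
  obtain ⟨ρ', hρ', hball'⟩ := Metric.eventually_nhds_iff_ball.mp hev
  have hPΓ : ∀ u ∈ ball (π0 ξ) ρ', P u ∈ Γ := fun u hu => hP1 u (hball' u hu)
  have hwdiff : ∀ u ∈ ball (π0 ξ) ρ', DifferentiableAt ℝ w (P u) :=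
    fun u hu => (hw.differentiableOn one_ne_zero).differentiableAt
      (hWopen.mem_nhds (hΓW (hPΓ u hu)))
  have hFdiff : ∀ u ∈ ball (π0 ξ) ρ', DifferentiableAt ℝ (fun u => w (P u)) u :=
    fun u hu => (hwdiff u hu).comp u (hPdiff u)
  have hFderiv : ∀ u ∈ ball (π0 ξ) ρ', fderiv ℝ (fun u => w (P u)) u = 0 := by
    intro u hu
    have hcomp : fderiv ℝ (fun u => w (P u)) u = (fderiv ℝ w (P u)).comp (fderiv ℝ P u) :=
      fderiv_comp u (hwdiff u hu) (hPdiff u)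
    ext v
    rw [hcomp]
    simp only [ContinuousLinearMap.comp_apply, ContinuousLinearMap.zero_apply]
    rw [hDw (P u) (hPΓ u hu) (fderiv ℝ P u v)]
    have hkey : ⟪n (P u), fderiv ℝ P u v⟫ = 0 := by
      have hc : HasDerivAt (fun t : ℝ => u + t • v) v 0 := by
        simpa using ((hasDerivAt_id (0:ℝ)).smul_const v)
      have hγd : HasDerivAt (fun t : ℝ => P (u + t • v)) (fderiv ℝ P u v) 0 := by
        have h3 := ((hPdiff (u + (0:ℝ) • v)).hasFDerivAt).comp_hasDerivAt 0 hc
        simp only [zero_smul, add_zero] at h3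
        exact h3
      have hγ0 : (fun t : ℝ => P (u + t • v)) 0 = P u := by simp
      have hevΓ : ∀ᶠ t in nhds (0:ℝ), P (u + t • v) ∈ Γ := by
        have hcγ : Continuous (fun t : ℝ => P (u + t • v)) :=
          hPcont.comp (continuous_const.add (continuous_id.smul continuous_const))
        have h4 : P (u + (0:ℝ) • v) ∈ ball ξ r := by
          simpa using hball' u hu
        filter_upwards [hcγ.continuousAt.eventually_mem (isOpen_ball.mem_nhds (by simpa using h4))]
          with t ht
        exact hP1 _ ht
      have h5 := n_normal (P u) (hPΓ u hu) _ hγ0 hevΓ hγd.differentiableAt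
      rw [hγd.deriv] at h5
      rw [real_inner_comm]
      exact h5
    rw [hkey]
    simp
  have hconst : ∀ u ∈ ball (π0 ξ) ρ', w (P u) = w (P (π0 ξ)) := by
    intro u hu
    have h6 := Convex.norm_image_sub_le_of_norm_fderiv_le
      (f := fun u => w (P u)) (C := 0) (fun x hx => hFdiff x hx)
      (fun x hx => by rw [hFderiv x hx]; simp) (convex_ball _ _)
      (mem_ball_self hρ') hu
    have h0 : ‖w (P u) - w (P (π0 ξ))‖ ≤ 0 := by simpa using h6
    exact sub_eq_zero.mp (norm_le_zero_iff.mp h0)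
  refine ⟨min ρ' r, lt_min hρ' hr, fun x hx hdist => ?_⟩
  have hxball : x ∈ ball ξ r := by
    rw [mem_ball]
    exact hdist.trans_le (min_le_right _ _)
  have hgx : ⟪x, ν⟫ = g (π0 x) := by
    have h7 : x ∈ Γ ∩ ball ξ r := ⟨hx, hxball⟩
    rw [hgraph] at h7
    exact h7.2
  have hxP : P (π0 x) = x := by
    show (π0 x : Euc d) + g (π0 x) • ν = x
    rw [← hgx]
    exact decomp_unit hν x
  have hπx : π0 x ∈ ball (π0 ξ) ρ' := by
    rw [mem_ball, dist_eq_norm]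
    have h8 : ‖π0 x - π0 ξ‖ = ‖(π0 (x - ξ) : Euc d)‖ := by
      rw [map_sub]
      rfl
    rw [h8]
    calc ‖(π0 (x - ξ) : Euc d)‖ ≤ ‖x - ξ‖ := proj_coe_norm_le _ _
      _ < ρ' := by rw [← dist_eq_norm]; exact hdist.trans_le (min_le_left _ _)
  calc w x = w (P (π0 x)) := by rw [hxP]
    _ = w (P (π0 ξ)) := hconst _ hπx
    _ = w ξ := by rw [hPξ]

lemma preconn_inter_frontier {X : Type*} [TopologicalSpace X] {s t : Set X}
    (hs : IsPreconnected s) (h1 : (s ∩ t).Nonempty) (h2 : (s \ t).Nonempty) :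
    (s ∩ frontier t).Nonempty := by
  by_contra hfr
  rw [Set.not_nonempty_iff_eq_empty] at hfr
  have hu : IsOpen (interior t) := isOpen_interior
  have hv : IsOpen (closure t)ᶜ := isClosed_closure.isOpen_compl
  have hcover : s ⊆ interior t ∪ (closure t)ᶜ := by
    intro x hx
    by_cases hxt : x ∈ closure t
    · left
      by_contra h
      have hmem : x ∈ s ∩ frontier t := ⟨hx, hxt, h⟩
      rw [hfr] at hmem
      exact hmem
    · right; exact hxt
  have hne1 : (s ∩ interior t).Nonempty := by
    obtain ⟨x, hxs, hxt⟩ := h1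
    refine ⟨x, hxs, ?_⟩
    rcases hcover hxs with h | h
    · exact h
    · exact absurd (subset_closure hxt) h
  have hne2 : (s ∩ (closure t)ᶜ).Nonempty := by
    obtain ⟨x, hxs, hxt⟩ := h2
    refine ⟨x, hxs, ?_⟩
    rcases hcover hxs with h | h
    · exact absurd (interior_subset h) hxt
    · exact h
  obtain ⟨x, _, hx1, hx2⟩ := hs _ _ hu hv hcover hne1 hne2
  exact hx2 (subset_closure (interior_subset hx1))

lemma isCompact_segment' {d : ℕ} (p q : Euc d) : IsCompact (segment ℝ p q) := by
  rw [segment_eq_image']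
  exact (isCompact_Icc).image (by continuity)

lemma seg_lipschitz {d : ℕ} {Ω : Set (Euc d)} {z : Euc d → Euc d} {M : ℝ}
    (hloc : ∀ x ∈ Ω, ∃ ρ > 0, ∀ p ∈ ball x ρ, ∀ q ∈ ball x ρ, ‖z p - z q‖ ≤ M * ‖p - q‖)
    {p q : Euc d} (hseg : segment ℝ p q ⊆ Ω) : ‖z p - z q‖ ≤ M * ‖p - q‖ := by
  rcases eq_or_ne p q with rfl | hpq
  · simp
  choose! ρ hρ hlip using hloc
  have hScpt := isCompact_segment' p q
  obtain ⟨δ, hδ, hleb⟩ := lebesgue_number_lemma_of_metric (ι := segment ℝ p q) hScpt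
    (c := fun i => ball (i : Euc d) (ρ i)) (fun i => isOpen_ball)
    (fun x hx => Set.mem_iUnion.mpr ⟨⟨x, hx⟩, mem_ball_self (hρ x (hseg hx))⟩)
  have hqp : (0:ℝ) < ‖q - p‖ := by
    rw [norm_pos_iff, sub_ne_zero]; exact hpq.symm
  obtain ⟨N, hN⟩ := exists_nat_gt (‖q - p‖ / δ)
  have hN0 : 0 < (N:ℝ) := lt_trans (div_pos hqp hδ) hN
  have hstep : ‖q - p‖ / N < δ := by
    rw [div_lt_iff₀ hN0]
    rw [div_lt_iff₀ hδ] at hN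
    linarith [hN]
  set f : ℕ → Euc d := fun j => p + ((j : ℝ)/N) • (q - p) with hf
  have hfmem : ∀ j : ℕ, j ≤ N → f j ∈ segment ℝ p q := by
    intro j hj
    rw [segment_eq_image']
    exact ⟨(j:ℝ)/N, ⟨by positivity, by
      rw [div_le_one hN0]; exact_mod_cast hj⟩, rfl⟩
  have hfd : ∀ j : ℕ, dist (f (j+1)) (f j) = ‖q - p‖ / N := by
    intro j
    rw [dist_eq_norm]
    have : f (j+1) - f j = ((1:ℝ)/N) • (q - p) := by
      rw [hf]
      simp only
      rw [add_sub_add_left_eq_sub, ← sub_smul]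
      congr 1
      push_cast
      field_simp
      ring
    rw [this, norm_smul]
    simp [abs_of_nonneg (by positivity : (0:ℝ) ≤ 1/(N:ℝ))]
    rw [div_eq_inv_mul, mul_comm]
  have hbound : ∀ j : ℕ, j + 1 ≤ N → dist (z (f j)) (z (f (j+1))) ≤ M * (‖q - p‖ / N) := by
    intro j hj
    have hjS : f j ∈ segment ℝ p q := hfmem j (by omega)
    obtain ⟨i, hi⟩ := hleb (f j) hjS
    have h1 : f j ∈ ball (i : Euc d) (ρ i) := hi (mem_ball_self hδ)
    have h2 : f (j+1) ∈ ball (i : Euc d) (ρ i) := hi (by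
      rw [mem_ball, hfd j]
      exact hstep)
    have := hlip (i : Euc d) (hseg i.2) (f j) h1 (f (j+1)) h2
    rw [dist_eq_norm]
    calc ‖z (f j) - z (f (j+1))‖ ≤ M * ‖f j - f (j+1)‖ := this
      _ = M * (‖q - p‖ / N) := by
          rw [← dist_eq_norm, dist_comm, hfd j]
  have hf0 : f 0 = p := by simp [hf]
  have hfN : f N = q := by
    rw [hf]
    simp only
    rw [div_self (ne_of_gt hN0), one_smul]
    abel
  calc ‖z p - z q‖ = dist (z (f 0)) (z (f N)) := by rw [hf0, hfN, dist_eq_norm]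
    _ ≤ ∑ j ∈ Finset.range N, dist (z (f j)) (z (f (j+1))) := dist_le_range_sum_dist (z ∘ f) N
    _ ≤ ∑ j ∈ Finset.range N, M * (‖q - p‖ / N) := by
        apply Finset.sum_le_sum
        intro j hj
        exact hbound j (Finset.mem_range.mp hj)
    _ = N * (M * (‖q - p‖ / N)) := by rw [Finset.sum_const, Finset.card_range, nsmul_eq_mul]
    _ = M * ‖q - p‖ := by field_simp
    _ = M * ‖p - q‖ := by rw [norm_sub_rev]

lemma chart_bound {d : ℕ} {Ω : Set (Euc d)} {z : Euc d → Euc d} {M : ℝ} (hM : 0 ≤ M)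
    (hseg : ∀ p q : Euc d, segment ℝ p q ⊆ Ω → ‖z p - z q‖ ≤ M * ‖p - q‖)
    {ξ : Euc d} {r : ℝ} (hr : 0 < r) {ν : Euc d} (hν : ‖ν‖ = 1)
    {g : ((Submodule.span ℝ {ν})ᗮ : Submodule ℝ (Euc d)) → ℝ} (hg : ContDiff ℝ 1 g)
    (hΩgraph : Ω ∩ ball ξ r =
      {x ∈ ball ξ r | g (Submodule.orthogonalProjection (Submodule.span ℝ {ν})ᗮ x) < ⟪x, ν⟫}) :
    ∃ ρ > 0, ∃ C, 0 ≤ C ∧ ∀ p ∈ Ω ∩ ball ξ ρ, ∀ q ∈ Ω ∩ ball ξ ρ,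
      ‖z p - z q‖ ≤ C * ‖p - q‖ := by
  set π0 := Submodule.orthogonalProjection ((Submodule.span ℝ {ν})ᗮ : Submodule ℝ (Euc d)) with hπ0
  -- Lipschitz constant for g on the closed ball of radius r
  have hgdiff : ∀ u, DifferentiableAt ℝ g u := fun u => (hg.differentiable one_ne_zero).differentiableAt
  obtain ⟨L0, hL0⟩ : ∃ L0, ∀ u ∈ closedBall (π0 ξ) r, ‖fderiv ℝ g u‖ ≤ L0 := by
    have hcpt : IsCompact (closedBall (π0 ξ) r) := isCompact_closedBall _ _
    have hcont : ContinuousOn (fderiv ℝ g) (closedBall (π0 ξ) r) :=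
      ((hg.continuous_fderiv one_ne_zero).continuousOn)
    obtain ⟨C, hC⟩ := hcpt.exists_bound_of_continuousOn (f := fderiv ℝ g) hcont
    exact ⟨C, hC⟩
  set L := max L0 0 with hL
  have hLnn : 0 ≤ L := le_max_right _ _
  have hglip : ∀ u1 ∈ closedBall (π0 ξ) r, ∀ u2 ∈ closedBall (π0 ξ) r,
      ‖g u1 - g u2‖ ≤ L * ‖u1 - u2‖ := by
    intro u1 h1 u2 h2
    exact Convex.norm_image_sub_le_of_norm_fderiv_le (fun u _ => hgdiff u)
      (fun u hu => (hL0 u hu).trans (le_max_left _ _)) (convex_closedBall _ _) h2 h1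
  set ρ := r / (8 + 2 * L) with hρdef
  have hden : (0:ℝ) < 8 + 2 * L := by linarith
  have hρ : 0 < ρ := div_pos hr hden
  have hscale : ∀ k : ℝ, 0 ≤ k → k ≤ 8 + 2 * L → k * ρ ≤ r := by
    intro k hk0 hk1
    rw [hρdef, ← mul_div_assoc, div_le_iff₀ hden]
    nlinarith [hr.le]
  have hρr : ρ ≤ r := by
    have := hscale 1 zero_le_one (by linarith)
    linarith
  refine ⟨ρ, hρ, M * (2 * (2 + L) + 1), by positivity, ?_⟩
  intro x hx y hy
  rcases eq_or_ne x y with rfl | hxy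
  · simp
  have hxΩ := hx.1
  have hyΩ := hy.1
  have hxξ : dist x ξ < ρ := mem_ball.mp hx.2
  have hyξ : dist y ξ < ρ := mem_ball.mp hy.2
  have hnxy : (0:ℝ) < ‖x - y‖ := by rw [norm_pos_iff, sub_ne_zero]; exact hxy
  have hxy2ρ : ‖x - y‖ < 2 * ρ := by
    have := dist_triangle x ξ y
    rw [dist_eq_norm] at *
    rw [dist_comm ξ y, dist_eq_norm] at this
    calc ‖x - y‖ ≤ ‖x - ξ‖ + ‖y - ξ‖ := by
          have h2 := norm_sub_le (x - ξ) (y - ξ)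
          simpa [sub_sub_sub_cancel_right] using h2
      _ < ρ + ρ := by
          apply add_lt_add <;> [skip; skip] <;> rwa [← dist_eq_norm]
      _ = 2 * ρ := by ring
  set h₀ := (2 + L) * ‖x - y‖ with hh₀def
  have hh₀ : 0 < h₀ := by positivity
  -- membership in Ω via the graph description
  have hmemΩ : ∀ w : Euc d, w ∈ ball ξ r → g (π0 w) < ⟪w, ν⟫ → w ∈ Ω := by
    intro w hw1 hw2
    have : w ∈ {x ∈ ball ξ r | g (π0 x) < ⟪x, ν⟫} := ⟨hw1, hw2⟩
    rw [← hΩgraph] at this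
    exact this.1
  have hgraphx : ∀ w : Euc d, w ∈ Ω → w ∈ ball ξ r → g (π0 w) < ⟪w, ν⟫ := by
    intro w hw1 hw2
    have : w ∈ Ω ∩ ball ξ r := ⟨hw1, hw2⟩
    rw [hΩgraph] at this
    exact this.2
  have hxballr : x ∈ ball ξ r := mem_ball.mpr (hxξ.trans_le hρr)
  have hyballr : y ∈ ball ξ r := mem_ball.mpr (hyξ.trans_le hρr)
  have hgx : g (π0 x) < ⟪x, ν⟫ := hgraphx x hxΩ hxballr
  have hgy : g (π0 y) < ⟪y, ν⟫ := hgraphx y hyΩ hyballr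
  have hπν : π0 ν = 0 := proj_nu_eq_zero
  have hinnerν : ∀ (w : Euc d) (s : ℝ), ⟪w + s • ν, ν⟫ = ⟪w, ν⟫ + s := by
    intro w s
    rw [inner_add_left, real_inner_smul_left, real_inner_self_eq_norm_sq, hν]
    ring
  -- vertical segments
  have hvert : ∀ w : Euc d, w ∈ Ω → dist w ξ < ρ → ∀ s : ℝ, 0 ≤ s → s ≤ h₀ →
      w + s • ν ∈ Ω := by
    intro w hwΩ hwξ s hs0 hs1
    have hwball : w ∈ ball ξ r := mem_ball.mpr (hwξ.trans_le hρr)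
    have hball : w + s • ν ∈ ball ξ r := by
      rw [mem_ball, dist_eq_norm]
      have : w + s • ν - ξ = (w - ξ) + s • ν := by abel
      rw [this]
      calc ‖(w - ξ) + s • ν‖ ≤ ‖w - ξ‖ + ‖s • ν‖ := norm_add_le _ _
        _ = ‖w - ξ‖ + s := by rw [norm_smul, hν]; simp [abs_of_nonneg hs0]
        _ < ρ + (2 + L) * (2 * ρ) := by
            apply add_lt_add_of_lt_of_le
            · rwa [← dist_eq_norm]
            · calc s ≤ h₀ := hs1
                _ ≤ (2 + L) * (2 * ρ) := by
                    rw [hh₀def]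
                    apply mul_le_mul_of_nonneg_left (le_of_lt hxy2ρ) (by linarith)
        _ ≤ r := by
            have := hscale (5 + 2 * L) (by linarith) (by linarith)
            linarith
    refine hmemΩ _ hball ?_
    have hproj : π0 (w + s • ν) = π0 w := by
      rw [map_add, (π0).map_smul, hπν]
      simp
    rw [hproj, hinnerν]
    have := hgraphx w hwΩ hwball
    linarith [this, hs0]
  -- horizontal segment
  have hhoriz : ∀ t : ℝ, 0 ≤ t → t ≤ 1 → x + t • (y - x) + h₀ • ν ∈ Ω := by
    intro t ht0 ht1
    have hptξ : ‖x + t • (y - x) - ξ‖ < 3 * ρ := by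
      calc ‖x + t • (y - x) - ξ‖ = ‖(x - ξ) + t • (y - x)‖ := by
            congr 1; abel
        _ ≤ ‖x - ξ‖ + t * ‖y - x‖ := by
            refine (norm_add_le _ _).trans ?_
            rw [norm_smul]
            simp [abs_of_nonneg ht0]
        _ < ρ + 1 * (2 * ρ) := by
            apply add_lt_add_of_lt_of_le
            · rwa [← dist_eq_norm]
            · apply mul_le_mul ht1 _ (norm_nonneg _) zero_le_one
              rw [norm_sub_rev]; exact le_of_lt hxy2ρ
        _ = 3 * ρ := by ring
    have hball : x + t • (y - x) + h₀ • ν ∈ ball ξ r := by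
      rw [mem_ball, dist_eq_norm]
      have : x + t • (y - x) + h₀ • ν - ξ = (x + t • (y - x) - ξ) + h₀ • ν := by abel
      rw [this]
      calc ‖(x + t • (y - x) - ξ) + h₀ • ν‖ ≤ ‖x + t • (y - x) - ξ‖ + ‖h₀ • ν‖ :=
            norm_add_le _ _
        _ < 3 * ρ + h₀ := by
            apply add_lt_add_of_lt_of_le hptξ
            rw [norm_smul, hν]
            simp [abs_of_nonneg (le_of_lt hh₀)]
        _ ≤ 3 * ρ + (2 + L) * (2 * ρ) := by
            apply add_le_add le_rfl
            rw [hh₀def]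
            apply mul_le_mul_of_nonneg_left (le_of_lt hxy2ρ) (by linarith)
        _ ≤ r := by
            have := hscale (7 + 2 * L) (by linarith) (by linarith)
            linarith
    refine hmemΩ _ hball ?_
    have hproj : π0 (x + t • (y - x) + h₀ • ν) = π0 x + t • (π0 y - π0 x) := by
      rw [map_add, map_add, (π0).map_smul, (π0).map_smul, hπν, map_sub]
      simp
    rw [hproj, hinnerν, inner_add_left, real_inner_smul_left]
    -- bound g at the shifted point
    have hπxball : π0 x ∈ closedBall (π0 ξ) r := by
      rw [mem_closedBall, dist_eq_norm]
      have : π0 x - π0 ξ = π0 (x - ξ) := by rw [map_sub]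
      rw [this]
      calc ‖(π0 (x - ξ) : Euc d)‖ ≤ ‖x - ξ‖ := proj_coe_norm_le _ _
        _ ≤ r := by rw [← dist_eq_norm]; exact le_of_lt (hxξ.trans_le hρr)
    have hπtball : π0 x + t • (π0 y - π0 x) ∈ closedBall (π0 ξ) r := by
      rw [mem_closedBall, dist_eq_norm]
      have heq : π0 x + t • (π0 y - π0 x) - π0 ξ = π0 (x + t • (y - x) - ξ) := by
        rw [map_sub, map_add, (π0).map_smul, map_sub]
        try abel
      rw [heq]
      calc ‖(π0 (x + t • (y - x) - ξ) : Euc d)‖ ≤ ‖x + t • (y - x) - ξ‖ := proj_coe_norm_le _ _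
        _ ≤ r := le_of_lt (hptξ.trans_le (by
            have := hscale 3 (by norm_num) (by linarith)
            linarith))
    have hgbound : g (π0 x + t • (π0 y - π0 x)) ≤ g (π0 x) + L * ‖x - y‖ := by
      have h1 := hglip _ hπtball _ hπxball
      have h2 : ‖(π0 x + t • (π0 y - π0 x)) - π0 x‖ ≤ ‖x - y‖ := by
        have heq2 : (π0 x + t • (π0 y - π0 x)) - π0 x = t • (π0 (y - x)) := by
          rw [map_sub]; abel
        rw [heq2, norm_smul]
        calc |t| * ‖(π0 (y - x) : Euc d)‖ ≤ 1 * ‖y - x‖ := by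
              apply mul_le_mul _ (proj_coe_norm_le _ _) (norm_nonneg _) zero_le_one
              rw [abs_of_nonneg ht0]; exact ht1
          _ = ‖x - y‖ := by rw [one_mul, norm_sub_rev]
      have h3 : g (π0 x + t • (π0 y - π0 x)) - g (π0 x) ≤ L * ‖x - y‖ := by
        calc g (π0 x + t • (π0 y - π0 x)) - g (π0 x)
            ≤ ‖g (π0 x + t • (π0 y - π0 x)) - g (π0 x)‖ := Real.le_norm_self _
          _ ≤ L * ‖(π0 x + t • (π0 y - π0 x)) - π0 x‖ := h1
          _ ≤ L * ‖x - y‖ := by apply mul_le_mul_of_nonneg_left h2 hLnn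
      linarith
    have hinnerbound : |⟪y - x, ν⟫| ≤ ‖x - y‖ := by
      calc |⟪y - x, ν⟫| ≤ ‖y - x‖ * ‖ν‖ := abs_real_inner_le_norm _ _
        _ = ‖x - y‖ := by rw [hν, mul_one, norm_sub_rev]
    have habs : t * ⟪y - x, ν⟫ ≥ -‖x - y‖ := by
      have : t * ⟪y - x, ν⟫ ≥ -(t * |⟪y - x, ν⟫|) := by
        have := neg_abs_le (⟪y - x, ν⟫)
        nlinarith
      have h4 : t * |⟪y - x, ν⟫| ≤ ‖x - y‖ := by
        calc t * |⟪y - x, ν⟫| ≤ 1 * ‖x - y‖ := by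
              apply mul_le_mul ht1 hinnerbound (abs_nonneg _) zero_le_one
          _ = ‖x - y‖ := one_mul _
      linarith
    calc g (π0 x + t • (π0 y - π0 x)) ≤ g (π0 x) + L * ‖x - y‖ := hgbound
      _ < ⟪x, ν⟫ + L * ‖x - y‖ := by linarith
      _ ≤ ⟪x, ν⟫ + t * ⟪y - x, ν⟫ + h₀ - ‖x - y‖ := by
          rw [hh₀def]; nlinarith
      _ = ⟪x, ν⟫ + t * ⟪y - x, ν⟫ + h₀ - ‖x - y‖ := rfl
      _ ≤ ⟪x, ν⟫ + t * ⟪y - x, ν⟫ + h₀ := by linarith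
  -- the three segments
  set x' := x + h₀ • ν with hx'
  set y' := y + h₀ • ν with hy'
  have hseg1 : segment ℝ x x' ⊆ Ω := by
    rw [segment_eq_image']
    rintro - ⟨t, ⟨ht0, ht1⟩, rfl⟩
    show x + t • (x' - x) ∈ Ω
    have : x + t • (x' - x) = x + (t * h₀) • ν := by
      rw [hx']
      congr 1
      rw [add_sub_cancel_left, smul_smul]
    rw [this]
    exact hvert x hxΩ hxξ (t * h₀) (by positivity)
      (by nlinarith)
  have hseg3 : segment ℝ y' y ⊆ Ω := by
    rw [segment_eq_image']
    rintro - ⟨t, ⟨ht0, ht1⟩, rfl⟩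
    show y' + t • (y - y') ∈ Ω
    have : y' + t • (y - y') = y + ((1 - t) * h₀) • ν := by
      rw [hy']
      module
    rw [this]
    exact hvert y hyΩ hyξ ((1 - t) * h₀) (by nlinarith) (by nlinarith)
  have hseg2 : segment ℝ x' y' ⊆ Ω := by
    rw [segment_eq_image']
    rintro - ⟨t, ⟨ht0, ht1⟩, rfl⟩
    show x' + t • (y' - x') ∈ Ω
    have : x' + t • (y' - x') = x + t • (y - x) + h₀ • ν := by
      rw [hx', hy']
      have : y + h₀ • ν - (x + h₀ • ν) = y - x := by abel
      rw [this]
      abel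
    rw [this]
    exact hhoriz t ht0 ht1
  -- assemble
  have hb1 := hseg x x' hseg1
  have hb2 := hseg x' y' hseg2
  have hb3 := hseg y' y hseg3
  have hxx' : ‖x - x'‖ = h₀ := by
    rw [hx']
    have : x - (x + h₀ • ν) = -(h₀ • ν) := by abel
    rw [this, norm_neg, norm_smul, hν, mul_one]
    exact abs_of_nonneg (le_of_lt hh₀)
  have hy'y : ‖y' - y‖ = h₀ := by
    rw [hy']
    have : y + h₀ • ν - y = h₀ • ν := by abel
    rw [this, norm_smul, hν, mul_one]
    exact abs_of_nonneg (le_of_lt hh₀)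
  have hx'y' : ‖x' - y'‖ = ‖x - y‖ := by
    rw [hx', hy']
    congr 1
    abel
  calc ‖z x - z y‖ = ‖(z x - z x') + (z x' - z y') + (z y' - z y)‖ := by
        congr 1; abel
    _ ≤ ‖z x - z x'‖ + ‖z x' - z y'‖ + ‖z y' - z y‖ := norm_add₃_le
    _ ≤ M * ‖x - x'‖ + M * ‖x' - y'‖ + M * ‖y' - y‖ := by
        exact add_le_add (add_le_add hb1 hb2) hb3
    _ = M * (2 * (2 + L) + 1) * ‖x - y‖ := by
        rw [hxx', hy'y, hx'y', hh₀def]; ring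


/-- sufficiency of the generalized Hadamard jump condition, connected
interface. If `Γ` is connected and `Dy⁺(x) = Dy⁻(x) + a(x) ⊗ n(x)` on `Γ` for some
continuous `a`, then there is a Lipschitz map `z` on `Ω` whose derivative agrees a.e.
with `Dy⁺` on `Ω⁺` and with `Dy⁻` on `Ω⁻`. -/
theorem statement2 (d : ℕ) (hd : 2 ≤ d)
    (Ω Ωp Ωm Γ : Set (Euc d)) (n : Euc d → Euc d)
    (hset : InterfaceSetting d Ω Ωp Ωm Γ n)
    (hconn : IsConnected Γ)
    (yp ym : Euc d → Euc d)
    (hyp : C1OnClosure d yp Ωp) (hym : C1OnClosure d ym Ωm)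
    (a : Euc d → Euc d) (ha : ContinuousOn a Γ)
    (hjump : ∀ x ∈ Γ, ∀ v : Euc d,
      fderiv ℝ yp x v = fderiv ℝ ym x v + ⟪n x, v⟫ • a x) :
    ∃ (z : Euc d → Euc d) (K : ℝ≥0), LipschitzOnWith K z Ω ∧
      (∀ᵐ x ∂(volume : Measure (Euc d)), x ∈ Ωp → HasFDerivAt z (fderiv ℝ yp x) x) ∧
      (∀ᵐ x ∂(volume : Measure (Euc d)), x ∈ Ωm → HasFDerivAt z (fderiv ℝ ym x) x) := by
  classical
  obtain ⟨Up, hUpo, hUps, hypc⟩ := hyp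
  obtain ⟨Um, hUmo, hUms, hymc⟩ := hym
  have hΩo : IsOpen Ω := hset.dom.isOpen
  have hΩpΩ : Ωp ⊆ Ω := by rw [hset.decomp]; intro x hx; exact Or.inl (Or.inl hx)
  have hΩmΩ : Ωm ⊆ Ω := by rw [hset.decomp]; intro x hx; exact Or.inr hx
  have hΓΩ : Γ ⊆ Ω := by rw [hset.interP]; exact inter_subset_left
  have hΓfp : Γ ⊆ frontier Ωp := by rw [hset.interP]; exact inter_subset_right
  have hΓfm : Γ ⊆ frontier Ωm := by rw [hset.interM]; exact inter_subset_right
  have hΓcp : Γ ⊆ closure Ωp := hΓfp.trans frontier_subset_closure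
  have hΓcm : Γ ⊆ closure Ωm := hΓfm.trans frontier_subset_closure
  have hΓUp : Γ ⊆ Up := fun x hx => hUps (hΓcp hx)
  have hΓUm : Γ ⊆ Um := fun x hx => hUms (hΓcm hx)
  have hΩpUp : Ωp ⊆ Up := fun x hx => hUps (subset_closure hx)
  have hΩmUm : Ωm ⊆ Um := fun x hx => hUms (subset_closure hx)
  have hΓnp : ∀ x ∈ Γ, x ∉ Ωp := by
    intro x hx
    have := hΓfp hx
    rw [hset.openP.frontier_eq] at this
    exact this.2
  have hΓnm : ∀ x ∈ Γ, x ∉ Ωm := by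
    intro x hx
    have := hΓfm hx
    rw [hset.openM.frontier_eq] at this
    exact this.2
  have hsubm : ∀ x ∈ Ω, x ∉ closure Ωp → x ∈ Ωm := by
    intro x hxΩ hxc
    rw [hset.decomp] at hxΩ
    rcases hxΩ with (h | h) | h
    · exact absurd (subset_closure h) hxc
    · exact absurd (hΓcp h) hxc
    · exact h
  have hΩmncp : ∀ x ∈ Ωm, x ∉ closure Ωp := by
    intro x hxm hxc
    have hnp : x ∉ Ωp := fun h => Set.disjoint_left.mp hset.disjointPM h hxm
    have hxfr : x ∈ frontier Ωp := by
      rw [hset.openP.frontier_eq]; exact ⟨hxc, hnp⟩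
    have hxΓ : x ∈ Γ := by rw [hset.interP]; exact ⟨hΩmΩ hxm, hxfr⟩
    exact hΓnm x hxΓ hxm
  -- derivative facts
  have hdiffp : ∀ x ∈ Up, DifferentiableAt ℝ yp x := fun x hx =>
    (hypc.differentiableOn one_ne_zero).differentiableAt (hUpo.mem_nhds hx)
  have hdiffm : ∀ x ∈ Um, DifferentiableAt ℝ ym x := fun x hx =>
    (hymc.differentiableOn one_ne_zero).differentiableAt (hUmo.mem_nhds hx)
  have hwc : ContDiffOn ℝ 1 (fun x => yp x - ym x) (Up ∩ Um) :=
    (hypc.mono inter_subset_left).sub (hymc.mono inter_subset_right)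
  have hDw : ∀ x ∈ Γ, ∀ v : Euc d,
      fderiv ℝ (fun x => yp x - ym x) x v = ⟪n x, v⟫ • a x := by
    intro x hx v
    rw [fderiv_fun_sub (hdiffp x (hΓUp hx)) (hdiffm x (hΓUm hx))]
    simp only [ContinuousLinearMap.sub_apply]
    rw [hjump x hx v]
    abel
  -- local constancy of yp - ym on Γ
  have hloc : ∀ ξ ∈ Γ, ∃ ρ > 0, ∀ x ∈ Γ, dist x ξ < ρ → yp x - ym x = yp ξ - ym ξ := by
    intro ξ hξ
    exact w_loc_const (hUpo.inter hUmo) (fun x hx => ⟨hΓUp hx, hΓUm hx⟩) hwc hDw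
      hset.n_normal hξ (hset.surface.locGraph ξ hξ)
  choose! ρΓ hρΓ using hloc
  obtain ⟨ξ₀, hξ₀⟩ := hconn.nonempty
  set c : Euc d := yp ξ₀ - ym ξ₀ with hc
  have hwconst : ∀ x ∈ Γ, yp x - ym x = c := by
    by_contra hbad
    push_neg at hbad
    obtain ⟨ξb, hξb, hne⟩ := hbad
    set U : Set (Euc d) := ⋃ (ξ : Euc d) (_ : ξ ∈ Γ ∧ yp ξ - ym ξ = c), ball ξ (ρΓ ξ) with hU
    set V : Set (Euc d) := ⋃ (ξ : Euc d) (_ : ξ ∈ Γ ∧ yp ξ - ym ξ ≠ c), ball ξ (ρΓ ξ) with hV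
    have hUo : IsOpen U := isOpen_iUnion fun ξ => isOpen_iUnion fun _ => isOpen_ball
    have hVo : IsOpen V := isOpen_iUnion fun ξ => isOpen_iUnion fun _ => isOpen_ball
    have hcover : Γ ⊆ U ∪ V := by
      intro x hx
      by_cases hxc : yp x - ym x = c
      · exact Or.inl (mem_iUnion₂.mpr ⟨x, ⟨hx, hxc⟩, mem_ball_self (hρΓ x hx).1⟩)
      · exact Or.inr (mem_iUnion₂.mpr ⟨x, ⟨hx, hxc⟩, mem_ball_self (hρΓ x hx).1⟩)
    have hne1 : (Γ ∩ U).Nonempty :=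
      ⟨ξ₀, hξ₀, mem_iUnion₂.mpr ⟨ξ₀, ⟨hξ₀, rfl⟩, mem_ball_self (hρΓ ξ₀ hξ₀).1⟩⟩
    have hne2 : (Γ ∩ V).Nonempty :=
      ⟨ξb, hξb, mem_iUnion₂.mpr ⟨ξb, ⟨hξb, hne⟩, mem_ball_self (hρΓ ξb hξb).1⟩⟩
    obtain ⟨x, hxΓ, hxU, hxV⟩ := hconn.isPreconnected U V hUo hVo hcover hne1 hne2
    obtain ⟨ξ1, hξ1, hball1⟩ := mem_iUnion₂.mp hxU
    obtain ⟨ξ2, hξ2, hball2⟩ := mem_iUnion₂.mp hxV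
    have h1 := (hρΓ ξ1 hξ1.1).2 x hxΓ (mem_ball.mp hball1)
    have h2 := (hρΓ ξ2 hξ2.1).2 x hxΓ (mem_ball.mp hball2)
    exact hξ2.2 (by rw [← h2, h1, hξ1.2])
  -- compactness and uniform bounds
  have hΩcpt : IsCompact (closure Ω) := hset.dom.isBounded.isCompact_closure
  have hclpcpt : IsCompact (closure Ωp) :=
    hΩcpt.of_isClosed_subset isClosed_closure (closure_mono hΩpΩ)
  have hclmcpt : IsCompact (closure Ωm) :=
    hΩcpt.of_isClosed_subset isClosed_closure (closure_mono hΩmΩ)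
  obtain ⟨δp, hδp, hδpsub⟩ := hclpcpt.exists_thickening_subset_open hUpo hUps
  obtain ⟨δm, hδm, hδmsub⟩ := hclmcpt.exists_thickening_subset_open hUmo hUms
  have hApUp : cthickening (δp/2) (closure Ωp) ⊆ Up :=
    (cthickening_subset_thickening' hδp (by linarith) _).trans hδpsub
  have hAmUm : cthickening (δm/2) (closure Ωm) ⊆ Um :=
    (cthickening_subset_thickening' hδm (by linarith) _).trans hδmsub
  obtain ⟨Mp0, hMp0⟩ := (hclpcpt.cthickening (r := δp/2)).exists_bound_of_continuousOn
    ((hypc.continuousOn_fderiv_of_isOpen hUpo le_rfl).mono hApUp)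
  obtain ⟨Mm0, hMm0⟩ := (hclmcpt.cthickening (r := δm/2)).exists_bound_of_continuousOn
    ((hymc.continuousOn_fderiv_of_isOpen hUmo le_rfl).mono hAmUm)
  set M := max (max Mp0 Mm0) 0 with hM
  have hMnn : 0 ≤ M := le_max_right _ _
  have hballAp : ∀ x ∈ closure Ωp, ball x (δp/2) ⊆ cthickening (δp/2) (closure Ωp) := by
    intro x hx y hy
    exact mem_cthickening_of_dist_le y x (δp/2) _ hx (le_of_lt (mem_ball.mp hy))
  have hballAm : ∀ x ∈ closure Ωm, ball x (δm/2) ⊆ cthickening (δm/2) (closure Ωm) := by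
    intro x hx y hy
    exact mem_cthickening_of_dist_le y x (δm/2) _ hx (le_of_lt (mem_ball.mp hy))
  have hlipp : ∀ x ∈ closure Ωp, ∀ p ∈ ball x (δp/2), ∀ q ∈ ball x (δp/2),
      ‖yp p - yp q‖ ≤ M * ‖p - q‖ := by
    intro x hx p hp q hq
    exact Convex.norm_image_sub_le_of_norm_fderiv_le
      (fun u hu => hdiffp u (hApUp (hballAp x hx hu)))
      (fun u hu => ((hMp0 u (hballAp x hx hu)).trans ((le_max_left _ _).trans (le_max_left _ _))))
      (convex_ball _ _) hq hp
  have hlipm : ∀ x ∈ closure Ωm, ∀ p ∈ ball x (δm/2), ∀ q ∈ ball x (δm/2),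
      ‖ym p - ym q‖ ≤ M * ‖p - q‖ := by
    intro x hx p hp q hq
    exact Convex.norm_image_sub_le_of_norm_fderiv_le
      (fun u hu => hdiffm u (hAmUm (hballAm x hx hu)))
      (fun u hu => ((hMm0 u (hballAm x hx hu)).trans ((le_max_right _ _).trans (le_max_left _ _))))
      (convex_ball _ _) hq hp
  -- the glued function
  set z : Euc d → Euc d := fun x => if x ∈ closure Ωp then yp x else ym x + c with hzdef
  have hzp : ∀ x ∈ closure Ωp, z x = yp x := fun x hx => if_pos hx
  have hzm : ∀ (x : Euc d), x ∉ closure Ωp → z x = ym x + c := fun x hx => if_neg hx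
  have hzm' : ∀ x ∈ Ωm, z x = ym x + c := fun x hx => hzm x (hΩmncp x hx)
  -- LOCAL lipschitz property
  have hLOCAL : ∀ x ∈ Ω, ∃ ρ > 0, ∀ p ∈ ball x ρ, ∀ q ∈ ball x ρ,
      ‖z p - z q‖ ≤ M * ‖p - q‖ := by
    intro x hxΩ
    rcases em (x ∈ Ωp) with hxp | hxp
    · obtain ⟨ε, hε, hball⟩ := Metric.isOpen_iff.mp hset.openP x hxp
      refine ⟨min ε (δp/2), lt_min hε (by linarith), ?_⟩
      intro p hp q hq
      have hp1 : p ∈ Ωp := hball (mem_ball.mpr ((mem_ball.mp hp).trans_le (min_le_left _ _)))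
      have hq1 : q ∈ Ωp := hball (mem_ball.mpr ((mem_ball.mp hq).trans_le (min_le_left _ _)))
      rw [hzp p (subset_closure hp1), hzp q (subset_closure hq1)]
      exact hlipp x (subset_closure hxp) p
        (mem_ball.mpr ((mem_ball.mp hp).trans_le (min_le_right _ _))) q
        (mem_ball.mpr ((mem_ball.mp hq).trans_le (min_le_right _ _)))
    rcases em (x ∈ Ωm) with hxm | hxm
    · obtain ⟨ε, hε, hball⟩ := Metric.isOpen_iff.mp hset.openM x hxm
      refine ⟨min ε (δm/2), lt_min hε (by linarith), ?_⟩
      intro p hp q hq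
      have hp1 : p ∈ Ωm := hball (mem_ball.mpr ((mem_ball.mp hp).trans_le (min_le_left _ _)))
      have hq1 : q ∈ Ωm := hball (mem_ball.mpr ((mem_ball.mp hq).trans_le (min_le_left _ _)))
      rw [hzm' p hp1, hzm' q hq1]
      have : ym p + c - (ym q + c) = ym p - ym q := by abel
      rw [this]
      exact hlipm x (subset_closure hxm) p
        (mem_ball.mpr ((mem_ball.mp hp).trans_le (min_le_right _ _))) q
        (mem_ball.mpr ((mem_ball.mp hq).trans_le (min_le_right _ _)))
    · -- x ∈ Γ
      have hxΓ : x ∈ Γ := by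
        have h := hxΩ
        rw [hset.decomp] at h
        rcases h with (h | h) | h
        · exact absurd h hxp
        · exact h
        · exact absurd h hxm
      obtain ⟨ε, hε, hballΩ⟩ := Metric.isOpen_iff.mp hΩo x hxΩ
      refine ⟨min ε (min (δp/2) (δm/2)), lt_min hε (lt_min (by linarith) (by linarith)), ?_⟩
      intro p hp q hq
      have hpballp : p ∈ ball x (δp/2) := mem_ball.mpr
        ((mem_ball.mp hp).trans_le ((min_le_right _ _).trans (min_le_left _ _)))
      have hqballp : q ∈ ball x (δp/2) := mem_ball.mpr
        ((mem_ball.mp hq).trans_le ((min_le_right _ _).trans (min_le_left _ _)))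
      have hpballm : p ∈ ball x (δm/2) := mem_ball.mpr
        ((mem_ball.mp hp).trans_le ((min_le_right _ _).trans (min_le_right _ _)))
      have hqballm : q ∈ ball x (δm/2) := mem_ball.mpr
        ((mem_ball.mp hq).trans_le ((min_le_right _ _).trans (min_le_right _ _)))
      have hpΩ : p ∈ Ω := hballΩ (mem_ball.mpr ((mem_ball.mp hp).trans_le (min_le_left _ _)))
      have hqΩ : q ∈ Ω := hballΩ (mem_ball.mpr ((mem_ball.mp hq).trans_le (min_le_left _ _)))
      -- mixed case helper
      have hmix : ∀ p' q' : Euc d, p' ∈ ball x (min ε (min (δp/2) (δm/2))) →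
          q' ∈ ball x (min ε (min (δp/2) (δm/2))) → p' ∈ closure Ωp → q' ∉ closure Ωp →
          ‖z p' - z q'‖ ≤ M * ‖p' - q'‖ := by
        intro p' q' hp' hq' hpc hqc
        have hq'Ω : q' ∈ Ω := hballΩ
          (mem_ball.mpr ((mem_ball.mp hq').trans_le (min_le_left _ _)))
        have hq'm : q' ∈ Ωm := hsubm q' hq'Ω hqc
        obtain ⟨t₀, ht₀seg, ht₀fr⟩ := preconn_inter_frontier
          (convex_segment p' q').isPreconnected
          ⟨p', left_mem_segment ℝ p' q', hpc⟩ ⟨q', right_mem_segment ℝ p' q', hqc⟩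
        have ht₀ball : t₀ ∈ ball x (min ε (min (δp/2) (δm/2))) :=
          (convex_ball x _).segment_subset hp' hq' ht₀seg
        have ht₀Γ : t₀ ∈ Γ := by
          have h1 : t₀ ∈ frontier Ωp := frontier_closure_subset ht₀fr
          have h2 : t₀ ∈ Ω := hballΩ
            (mem_ball.mpr ((mem_ball.mp ht₀ball).trans_le (min_le_left _ _)))
          rw [hset.interP]; exact ⟨h2, h1⟩
        have ht₀bp : t₀ ∈ ball x (δp/2) := mem_ball.mpr
          ((mem_ball.mp ht₀ball).trans_le ((min_le_right _ _).trans (min_le_left _ _)))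
        have ht₀bm : t₀ ∈ ball x (δm/2) := mem_ball.mpr
          ((mem_ball.mp ht₀ball).trans_le ((min_le_right _ _).trans (min_le_right _ _)))
        have hp'bp : p' ∈ ball x (δp/2) := mem_ball.mpr
          ((mem_ball.mp hp').trans_le ((min_le_right _ _).trans (min_le_left _ _)))
        have hq'bm : q' ∈ ball x (δm/2) := mem_ball.mpr
          ((mem_ball.mp hq').trans_le ((min_le_right _ _).trans (min_le_right _ _)))
        have hct := hwconst t₀ ht₀Γ
        have hkey : z p' - z q' = (yp p' - yp t₀) + (ym t₀ - ym q') := by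
          rw [hzp p' hpc, hzm q' hqc, ← hct]
          abel
        rw [hkey]
        have h1 := hlipp x (hΓcp hxΓ) p' hp'bp t₀ ht₀bp
        have h2 := hlipm x (hΓcm hxΓ) t₀ ht₀bm q' hq'bm
        have h3 : dist p' t₀ + dist t₀ q' = dist p' q' := dist_add_dist_of_mem_segment ht₀seg
        calc ‖(yp p' - yp t₀) + (ym t₀ - ym q')‖ ≤ ‖yp p' - yp t₀‖ + ‖ym t₀ - ym q'‖ :=
              norm_add_le _ _
          _ ≤ M * ‖p' - t₀‖ + M * ‖t₀ - q'‖ := add_le_add h1 h2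
          _ = M * (dist p' t₀ + dist t₀ q') := by rw [dist_eq_norm, dist_eq_norm]; ring
          _ = M * ‖p' - q'‖ := by rw [h3, dist_eq_norm]
      rcases em (p ∈ closure Ωp) with hpc | hpc <;> rcases em (q ∈ closure Ωp) with hqc | hqc
      · rw [hzp p hpc, hzp q hqc]
        exact hlipp x (hΓcp hxΓ) p hpballp q hqballp
      · exact hmix p q hp hq hpc hqc
      · rw [norm_sub_rev, norm_sub_rev p q]
        exact hmix q p hq hp hqc hpc
      · rw [hzm p hpc, hzm q hqc]
        have : ym p + c - (ym q + c) = ym p - ym q := by abel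
        rw [this]
        exact hlipm x (hΓcm hxΓ) p hpballm q hqballm
  -- segment estimate
  have hSEG : ∀ p q : Euc d, segment ℝ p q ⊆ Ω → ‖z p - z q‖ ≤ M * ‖p - q‖ :=
    fun p q h => seg_lipschitz hLOCAL h
  -- covering estimates on the closure
  have hcover : ∀ ξ ∈ closure Ω, ∃ ρ > 0, ∃ C, 0 ≤ C ∧ ∀ p ∈ Ω ∩ ball ξ ρ,
      ∀ q ∈ Ω ∩ ball ξ ρ, ‖z p - z q‖ ≤ C * ‖p - q‖ := by
    intro ξ hξ
    rcases em (ξ ∈ Ω) with hξΩ | hξΩ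
    · obtain ⟨ρ, hρ, hl⟩ := hLOCAL ξ hξΩ
      exact ⟨ρ, hρ, M, hMnn, fun p hp q hq => hl p hp.2 q hq.2⟩
    · have hfr : ξ ∈ frontier Ω := by
        rw [hΩo.frontier_eq]; exact ⟨hξ, hξΩ⟩
      obtain ⟨r, hr, ν, hν, g, hg, hgr1, hgr2⟩ := hset.dom.locGraph ξ hfr
      exact chart_bound hMnn hSEG hr hν hg hgr1
  choose! ρB hρB CB hCB0 hCB using hcover
  -- boundedness of z
  obtain ⟨B1, hB1⟩ := hclpcpt.exists_bound_of_continuousOn ((hypc.continuousOn).mono hUps)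
  obtain ⟨B2, hB2⟩ := hclmcpt.exists_bound_of_continuousOn
    (((hymc.continuousOn).mono hUms).add continuousOn_const (g := fun _ => c))
  set B := max (max B1 B2) 0 with hB
  have hzbound : ∀ p ∈ Ω, ‖z p‖ ≤ B := by
    intro p hp
    rcases em (p ∈ closure Ωp) with h | h
    · rw [hzp p h]
      exact (hB1 p h).trans ((le_max_left _ _).trans (le_max_left _ _))
    · rw [hzm p h]
      exact (hB2 p (subset_closure (hsubm p hp h))).trans
        ((le_max_right _ _).trans (le_max_left _ _))
  have hDbound : ∀ p ∈ Ω, ∀ q ∈ Ω, ‖z p - z q‖ ≤ 2 * B := by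
    intro p hp q hq
    calc ‖z p - z q‖ ≤ ‖z p‖ + ‖z q‖ := norm_sub_le _ _
      _ ≤ 2 * B := by linarith [hzbound p hp, hzbound q hq]
  have hBnn : 0 ≤ B := le_max_right _ _
  -- finite subcover
  have hclne : (closure Ω).Nonempty := ⟨ξ₀, subset_closure (hΓΩ hξ₀)⟩
  obtain ⟨I, hI⟩ := hΩcpt.elim_finite_subcover
    (fun ξ : closure Ω => ball (ξ : Euc d) (ρB ξ / 2)) (fun _ => isOpen_ball)
    (fun x hx => mem_iUnion.mpr ⟨⟨x, hx⟩, mem_ball_self (by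
      have := (hρB x hx); linarith)⟩)
  have hIne : I.Nonempty := by
    obtain ⟨x, hx⟩ := hclne
    obtain ⟨i, hi⟩ := mem_iUnion.mp (hI hx)
    obtain ⟨hiI, _⟩ := mem_iUnion.mp hi
    exact ⟨i, hiI⟩
  set δ := I.inf' hIne (fun i => ρB (i : Euc d) / 2) with hδdef
  have hδpos : 0 < δ := by
    rw [hδdef, Finset.lt_inf'_iff]
    intro i _
    have := hρB (i : Euc d) i.2
    linarith
  set K₀ := I.sup' hIne (fun i => CB (i : Euc d)) with hK₀def
  set Kr := max K₀ (2 * B / δ) with hKr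
  have hKnn : 0 ≤ Kr := le_trans (div_nonneg (by linarith) (le_of_lt hδpos)) (le_max_right _ _)
  have hKlip : ∀ p ∈ Ω, ∀ q ∈ Ω, ‖z p - z q‖ ≤ Kr * ‖p - q‖ := by
    intro p hp q hq
    rcases lt_or_ge (dist p q) δ with hlt | hge
    · obtain ⟨i, hi⟩ := mem_iUnion.mp (hI (subset_closure hp))
      obtain ⟨hiI, hpball⟩ := mem_iUnion.mp hi
      have hδle : δ ≤ ρB (i : Euc d) / 2 := Finset.inf'_le _ hiI
      have hp' : p ∈ ball (i : Euc d) (ρB (i : Euc d)) := by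
        rw [mem_ball]
        have := mem_ball.mp hpball
        have hpos := (hρB (i : Euc d) i.2)
        linarith
      have hq' : q ∈ ball (i : Euc d) (ρB (i : Euc d)) := by
        rw [mem_ball]
        have h1 := mem_ball.mp hpball
        calc dist q (i : Euc d) ≤ dist q p + dist p (i : Euc d) := dist_triangle _ _ _
          _ < δ + ρB (i : Euc d) / 2 := by
              rw [dist_comm q p]
              exact add_lt_add_of_lt_of_le hlt (le_of_lt h1)
          _ ≤ ρB (i : Euc d) := by linarith
      have := hCB (i : Euc d) i.2 p ⟨hp, hp'⟩ q ⟨hq, hq'⟩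
      calc ‖z p - z q‖ ≤ CB (i : Euc d) * ‖p - q‖ := this
        _ ≤ K₀ * ‖p - q‖ := by
            apply mul_le_mul_of_nonneg_right _ (norm_nonneg _)
            exact Finset.le_sup' (fun i => CB ((i : closure Ω) : Euc d)) hiI
        _ ≤ Kr * ‖p - q‖ := by
            apply mul_le_mul_of_nonneg_right (le_max_left _ _) (norm_nonneg _)
    · calc ‖z p - z q‖ ≤ 2 * B := hDbound p hp q hq
        _ = (2 * B / δ) * δ := by field_simp
        _ ≤ (2 * B / δ) * ‖p - q‖ := by
            apply mul_le_mul_of_nonneg_left _ (div_nonneg (by linarith) (le_of_lt hδpos))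
            rw [← dist_eq_norm]
            exact hge
        _ ≤ Kr * ‖p - q‖ := by
            apply mul_le_mul_of_nonneg_right (le_max_right _ _) (norm_nonneg _)
  refine ⟨z, Real.toNNReal Kr, ?_, ?_, ?_⟩
  · rw [lipschitzOnWith_iff_dist_le_mul]
    intro x hx y hy
    rw [Real.coe_toNNReal Kr hKnn, dist_eq_norm, dist_eq_norm]
    exact hKlip x hx y hy
  · apply ae_of_all
    intro x hx
    have hd : HasFDerivAt yp (fderiv ℝ yp x) x := (hdiffp x (hΩpUp hx)).hasFDerivAt
    apply hd.congr_of_eventuallyEq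
    filter_upwards [hset.openP.mem_nhds hx] with y hy
    exact hzp y (subset_closure hy)
  · apply ae_of_all
    intro x hx
    have hd : HasFDerivAt (fun x => ym x + c) (fderiv ℝ ym x) x :=
      ((hdiffm x (hΩmUm hx)).hasFDerivAt).add_const c
    apply hd.congr_of_eventuallyEq
    filter_upwards [hset.openM.mem_nhds hx] with y hy
    exact hzm' y hy

end
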